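/- arXiv:2412.07764 — 2 statements merged into one kernel-verified Lean document; each statement's English description precedes it below -/
import Mathlib

section
/- Let H_pen be the block penalty Hamiltonian on blocks a,b,c with |g_z^{(b)}| ≠ |g_z^{(c)}|, pseudoinverse H_pen⁻¹, and zero-eigenspace projector P₀. Set A := Z_i^{(a)} X_j^{(b)} and B := Z_i^{(a)} X_k^{(c)} for any i,j,k ∈ {1,2,3,4} (A and B share the same physical Z qubit in block a). Then P₀ A H_pen⁻¹ B P₀ = 0 and P₀ B H_pen⁻¹ A P₀ = 0. -/
open Matrix Kronecker

noncomputable section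

def PauliX : Matrix (Fin 2) (Fin 2) ℂ := !![0, 1; 1, 0]
def PauliY : Matrix (Fin 2) (Fin 2) ℂ := !![0, -Complex.I; Complex.I, 0]
def PauliZ : Matrix (Fin 2) (Fin 2) ℂ := !![1, 0; 0, -1]

/-- The single-qubit operator `A` acting on qubit `i` of a register of qubits
indexed by `ι` (identity on all other qubits). -/
def pauliAt {ι : Type*} [Fintype ι] [DecidableEq ι] (A : Matrix (Fin 2) (Fin 2) ℂ)
    (i : ι) : Matrix (ι → Fin 2) (ι → Fin 2) ℂ :=
  fun f g => A (f i) (g i) * ∏ j ∈ Finset.univ.erase i, (if f j = g j then 1 else 0)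

/-- The block penalty Hamiltonian on `n` blocks of 4 qubits:
`H_pen = Σ_b (g_x⁽ᵇ⁾ X₁⁽ᵇ⁾X₂⁽ᵇ⁾ + g_z⁽ᵇ⁾ Z₁⁽ᵇ⁾Z₂⁽ᵇ⁾ + g_x⁽ᵇ⁾ X₃⁽ᵇ⁾X₄⁽ᵇ⁾ + g_z⁽ᵇ⁾ Z₃⁽ᵇ⁾Z₄⁽ᵇ⁾)`. -/
def HpenBlocks (n : ℕ) (gx gz : Fin n → ℝ) :
    Matrix (Fin n × Fin 4 → Fin 2) (Fin n × Fin 4 → Fin 2) ℂ :=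
  ∑ b : Fin n,
    ((gx b : ℂ) • (pauliAt PauliX (b, (0 : Fin 4)) * pauliAt PauliX (b, (1 : Fin 4))) +
     (gz b : ℂ) • (pauliAt PauliZ (b, (0 : Fin 4)) * pauliAt PauliZ (b, (1 : Fin 4))) +
     (gx b : ℂ) • (pauliAt PauliX (b, (2 : Fin 4)) * pauliAt PauliX (b, (3 : Fin 4))) +
     (gz b : ℂ) • (pauliAt PauliZ (b, (2 : Fin 4)) * pauliAt PauliZ (b, (3 : Fin 4))))

section GadgetProofAux

variable {ι : Type*} [Fintype ι] [DecidableEq ι]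

lemma sum_delta_off (i : ι) (f : ι → Fin 2) (G : (ι → Fin 2) → ℂ) :
    ∑ h : ι → Fin 2, (∏ j ∈ Finset.univ.erase i, (if f j = h j then (1:ℂ) else 0)) * G h
      = ∑ x : Fin 2, G (Function.update f i x) := by
  have key : ∀ h : ι → Fin 2,
      (∏ j ∈ Finset.univ.erase i, (if f j = h j then (1:ℂ) else 0)) * G h
        = ∑ x : Fin 2, if Function.update f i x = h then G h else 0 := by
    intro h
    by_cases hc : ∀ j ∈ Finset.univ.erase i, f j = h j
    · have hprod : (∏ j ∈ Finset.univ.erase i, (if f j = h j then (1:ℂ) else 0)) = 1 := by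
        rw [Finset.prod_boole, if_pos hc]
      have hup : ∀ x : Fin 2, (Function.update f i x = h ↔ x = h i) := by
        intro x
        constructor
        · intro he; rw [← he]; simp [Function.update]
        · intro he; funext j
          by_cases hj : j = i
          · subst hj; simp [Function.update, he]
          · simp only [Function.update, dif_neg hj]
            exact hc j (by simp [hj])
      rw [hprod, one_mul]
      rw [Finset.sum_congr rfl (fun x _ => by rw [if_congr (hup x) rfl rfl])]
      simp
    · push_neg at hc
      obtain ⟨j, hj, hne⟩ := hc
      have hprod : (∏ j ∈ Finset.univ.erase i, (if f j = h j then (1:ℂ) else 0)) = 0 := by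
        rw [Finset.prod_boole, if_neg]; intro hall; exact absurd (hall j hj) hne
      rw [hprod, zero_mul]
      symm
      apply Finset.sum_eq_zero
      intro x _
      rw [if_neg]
      intro he
      apply hne
      rw [← he]
      have : j ≠ i := (Finset.mem_erase.mp hj).1
      simp [Function.update, this]
  rw [Finset.sum_congr rfl (fun h _ => key h), Finset.sum_comm]
  apply Finset.sum_congr rfl
  intro x _
  simp

lemma pauliAt_mul_same (A B : Matrix (Fin 2) (Fin 2) ℂ) (i : ι) :
    pauliAt A i * pauliAt B i = pauliAt (A * B) i := by
  ext f g
  simp only [pauliAt, Matrix.mul_apply]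
  have : ∀ h : ι → Fin 2, A (f i) (h i) * (∏ j ∈ Finset.univ.erase i, (if f j = h j then (1:ℂ) else 0)) *
      (B (h i) (g i) * ∏ j ∈ Finset.univ.erase i, (if h j = g j then (1:ℂ) else 0))
      = (∏ j ∈ Finset.univ.erase i, (if f j = h j then (1:ℂ) else 0)) *
        (A (f i) (h i) * B (h i) (g i) * ∏ j ∈ Finset.univ.erase i, (if h j = g j then (1:ℂ) else 0)) := by
    intro h; ring
  rw [Finset.sum_congr rfl (fun h _ => this h), sum_delta_off i f]
  simp only [Function.update_self]
  have : ∀ x : Fin 2,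
      A (f i) x * B x (g i) * ∏ j ∈ Finset.univ.erase i,
        (if Function.update f i x j = g j then (1:ℂ) else 0)
      = A (f i) x * B x (g i) * ∏ j ∈ Finset.univ.erase i, (if f j = g j then (1:ℂ) else 0) := by
    intro x
    congr 1
    apply Finset.prod_congr rfl
    intro j hj
    have : j ≠ i := (Finset.mem_erase.mp hj).1
    simp [Function.update, this]
  rw [Finset.sum_congr rfl (fun x _ => this x), ← Finset.sum_mul]

lemma pauliAt_mul_ne_apply (A B : Matrix (Fin 2) (Fin 2) ℂ) {i i' : ι} (hii : i ≠ i')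
    (f g : ι → Fin 2) :
    (pauliAt A i * pauliAt B i') f g
      = A (f i) (g i) * B (f i') (g i') *
        ∏ j ∈ (Finset.univ.erase i).erase i', (if f j = g j then (1:ℂ) else 0) := by
  simp only [pauliAt, Matrix.mul_apply]
  have rearr : ∀ h : ι → Fin 2,
      A (f i) (h i) * (∏ j ∈ Finset.univ.erase i, (if f j = h j then (1:ℂ) else 0)) *
        (B (h i') (g i') * ∏ j ∈ Finset.univ.erase i', (if h j = g j then (1:ℂ) else 0))
      = (∏ j ∈ Finset.univ.erase i, (if f j = h j then (1:ℂ) else 0)) *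
        (A (f i) (h i) * B (h i') (g i') *
          ∏ j ∈ Finset.univ.erase i', (if h j = g j then (1:ℂ) else 0)) := by
    intro h; ring
  rw [Finset.sum_congr rfl (fun h _ => rearr h), sum_delta_off i f]
  have hmem : i ∈ Finset.univ.erase i' := by simp [hii]
  have key : ∀ x : Fin 2,
      A (f i) (Function.update f i x i) * B (Function.update f i x i') (g i') *
        ∏ j ∈ Finset.univ.erase i', (if Function.update f i x j = g j then (1:ℂ) else 0)
      = A (f i) x * B (f i') (g i') *
        ((if x = g i then (1:ℂ) else 0) *
          ∏ j ∈ (Finset.univ.erase i').erase i, (if f j = g j then (1:ℂ) else 0)) := by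
    intro x
    rw [← Finset.mul_prod_erase _ _ hmem]
    have h1 : Function.update f i x i = x := Function.update_self i x f
    have h2 : Function.update f i x i' = f i' := Function.update_of_ne (Ne.symm hii) x f
    rw [h1, h2]
    congr 2
    apply Finset.prod_congr rfl
    intro j hj
    have : j ≠ i := (Finset.mem_erase.mp hj).1
    simp [Function.update, this]
  rw [Finset.sum_congr rfl (fun x _ => key x)]
  rw [Finset.sum_eq_single (g i) (by intro x _ hx; simp [hx]) (by simp)]
  rw [Finset.erase_right_comm]
  simp [mul_assoc]

lemma pauliAt_comm_of_ne (A B : Matrix (Fin 2) (Fin 2) ℂ) {i i' : ι} (hii : i ≠ i') :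
    pauliAt A i * pauliAt B i' = pauliAt B i' * pauliAt A i := by
  ext f g
  rw [pauliAt_mul_ne_apply A B hii, pauliAt_mul_ne_apply B A hii.symm, Finset.erase_right_comm]
  ring

lemma pauliAt_one (i : ι) : pauliAt (1 : Matrix (Fin 2) (Fin 2) ℂ) i = 1 := by
  ext f g
  simp only [pauliAt, Matrix.one_apply, Finset.prod_boole]
  by_cases hfg : f = g
  · subst hfg; simp
  · have : ¬ (f i = g i ∧ ∀ j ∈ Finset.univ.erase i, f j = g j) := by
      intro ⟨h1, h2⟩
      apply hfg
      funext j
      by_cases hj : j = i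
      · subst hj; exact h1
      · exact h2 j (by simp [hj])
    rw [if_neg hfg]
    rcases not_and_or.mp this with h | h
    · rw [if_neg h, zero_mul]
    · rw [if_neg h, mul_zero]

lemma pauliAt_smul (c : ℂ) (A : Matrix (Fin 2) (Fin 2) ℂ) (i : ι) :
    pauliAt (c • A) i = c • pauliAt A i := by
  ext f g; simp [pauliAt, mul_assoc]

lemma pauliAt_neg (A : Matrix (Fin 2) (Fin 2) ℂ) (i : ι) :
    pauliAt (-A) i = - pauliAt A i := by
  ext f g; simp [pauliAt]

lemma pauliAt_conjTranspose (A : Matrix (Fin 2) (Fin 2) ℂ) (i : ι) :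
    (pauliAt A i)ᴴ = pauliAt Aᴴ i := by
  ext f g
  simp only [pauliAt, Matrix.conjTranspose_apply, star_mul', star_prod]
  congr 1
  apply Finset.prod_congr rfl
  intro j _
  by_cases h : f j = g j
  · simp [h]
  · simp [h, Ne.symm h]

lemma PauliX_mul_self : PauliX * PauliX = 1 := by
  ext x y; fin_cases x <;> fin_cases y <;> simp [PauliX, Matrix.mul_apply, Fin.sum_univ_two]

lemma PauliZ_mul_self : PauliZ * PauliZ = 1 := by
  ext x y; fin_cases x <;> fin_cases y <;> simp [PauliZ, Matrix.mul_apply, Fin.sum_univ_two]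

lemma PauliZX_anticomm : PauliZ * PauliX = -(PauliX * PauliZ) := by
  ext x y; fin_cases x <;> fin_cases y <;> simp [PauliX, PauliZ, Matrix.mul_apply, Fin.sum_univ_two]

lemma PauliX_herm : PauliXᴴ = PauliX := by
  ext x y; fin_cases x <;> fin_cases y <;> simp [PauliX]

lemma PauliZ_herm : PauliZᴴ = PauliZ := by
  ext x y; fin_cases x <;> fin_cases y <;> simp [PauliZ]

namespace GadgetAux

abbrev TIdx (n : ℕ) := Fin n × Fin 2 × Bool

abbrev QMat (n : ℕ) := Matrix (Fin n × Fin 4 → Fin 2) (Fin n × Fin 4 → Fin 2) ℂ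

def pairQ (p : Fin 2) (r : Fin 2) : Fin 4 := ⟨2 * p.val + r.val, by omega⟩

def pmat (e : Bool) : Matrix (Fin 2) (Fin 2) ℂ := if e then PauliX else PauliZ

def tauM {n : ℕ} (t : TIdx n) : QMat n :=
  pauliAt (pmat t.2.2) (t.1, pairQ t.2.1 0) * pauliAt (pmat t.2.2) (t.1, pairQ t.2.1 1)

def coef {n : ℕ} (gx gz : Fin n → ℝ) (t : TIdx n) : ℝ :=
  if t.2.2 then gx t.1 else gz t.1

lemma pairQ_ne (p : Fin 2) : pairQ p 0 ≠ pairQ p 1 := by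
  simp only [pairQ, Ne, Fin.mk.injEq]
  omega

lemma pairQ_ne_of_ne {p p' : Fin 2} (h : p ≠ p') (r r' : Fin 2) : pairQ p r ≠ pairQ p' r' := by
  have hp : p.val ≠ p'.val := fun hv => h (Fin.ext hv)
  simp only [pairQ, Ne, Fin.mk.injEq]
  have := r.isLt; have := r'.isLt
  omega

def pairOf (i : Fin 4) : Fin 2 := ⟨i.val / 2, by omega⟩

lemma eq_pairQ (i : Fin 4) : i = pairQ (pairOf i) 0 ∨ i = pairQ (pairOf i) 1 := by
  rcases Nat.lt_or_ge (i.val % 2) 1 with h | h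
  · left; apply Fin.ext; simp only [pairQ, pairOf]; omega
  · right; apply Fin.ext; simp only [pairQ, pairOf]; omega

lemma ne_pairQ_of_pair_ne {i : Fin 4} {p : Fin 2} (h : pairOf i ≠ p) (r : Fin 2) :
    i ≠ pairQ p r := by
  intro he
  apply h
  subst he
  apply Fin.ext
  simp only [pairOf, pairQ]
  have := r.isLt; have := p.isLt
  omega

lemma pmat_mul_self (e : Bool) : pmat e * pmat e = 1 := by
  cases e <;> simp [pmat, PauliX_mul_self, PauliZ_mul_self]

lemma pmat_herm (e : Bool) : (pmat e)ᴴ = pmat e := by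
  cases e <;> simp [pmat, PauliX_herm, PauliZ_herm]

lemma Hpen_eq (n : ℕ) (gx gz : Fin n → ℝ) :
    HpenBlocks n gx gz = ∑ t : TIdx n, (coef gx gz t : ℂ) • tauM t := by
  rw [HpenBlocks, Fintype.sum_prod_type]
  apply Finset.sum_congr rfl
  intro b _
  rw [Fintype.sum_prod_type, Fin.sum_univ_two]
  rw [Fintype.sum_bool, Fintype.sum_bool]
  have h00 : pairQ 0 0 = (0 : Fin 4) := rfl
  have h01 : pairQ 0 1 = (1 : Fin 4) := rfl
  have h10 : pairQ 1 0 = (2 : Fin 4) := rfl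
  have h11 : pairQ 1 1 = (3 : Fin 4) := rfl
  simp only [tauM, coef, pmat, if_true, if_false, h00, h01, h10, h11]
  abel_nf
  exact congrArg _ (add_left_comm _ _ _)

end GadgetAux
namespace GadgetAux

variable {ι : Type*} [Fintype ι] [DecidableEq ι]

lemma commute_single_pair {C D : Matrix (Fin 2) (Fin 2) ℂ} {q q1 q2 : ι}
    (h1 : q ≠ q1) (h2 : q ≠ q2) :
    Commute (pauliAt C q) (pauliAt D q1 * pauliAt D q2) :=
  Commute.mul_right (pauliAt_comm_of_ne C D h1) (pauliAt_comm_of_ne C D h2)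

lemma commute_pair_pair {C D : Matrix (Fin 2) (Fin 2) ℂ} {q1 q2 q1' q2' : ι}
    (h11 : q1 ≠ q1') (h12 : q1 ≠ q2') (h21 : q2 ≠ q1') (h22 : q2 ≠ q2') :
    Commute (pauliAt C q1 * pauliAt C q2) (pauliAt D q1' * pauliAt D q2') :=
  Commute.mul_left (commute_single_pair h11 h12) (commute_single_pair h21 h22)

lemma pair_mul_pair {A B : Matrix (Fin 2) (Fin 2) ℂ} {q1 q2 : ι} (h : q1 ≠ q2) :
    (pauliAt A q1 * pauliAt A q2) * (pauliAt B q1 * pauliAt B q2)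
      = pauliAt (A * B) q1 * pauliAt (A * B) q2 := by
  have swap : pauliAt A q2 * pauliAt B q1 = pauliAt B q1 * pauliAt A q2 :=
    pauliAt_comm_of_ne A B h.symm
  calc pauliAt A q1 * pauliAt A q2 * (pauliAt B q1 * pauliAt B q2)
      = pauliAt A q1 * (pauliAt A q2 * pauliAt B q1) * pauliAt B q2 := by simp only [mul_assoc]
    _ = pauliAt A q1 * (pauliAt B q1 * pauliAt A q2) * pauliAt B q2 := by rw [swap]
    _ = (pauliAt A q1 * pauliAt B q1) * (pauliAt A q2 * pauliAt B q2) := by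
          rw [mul_assoc, mul_assoc, mul_assoc]
    _ = pauliAt (A * B) q1 * pauliAt (A * B) q2 := by
          rw [pauliAt_mul_same, pauliAt_mul_same]

lemma commute_pair_pair_same {q1 q2 : ι} (h : q1 ≠ q2)
    (C D : Matrix (Fin 2) (Fin 2) ℂ) (hCD : C * D = -(D * C)) :
    Commute (pauliAt C q1 * pauliAt C q2) (pauliAt D q1 * pauliAt D q2) := by
  unfold Commute SemiconjBy
  rw [pair_mul_pair h, pair_mul_pair h, hCD, pauliAt_neg, pauliAt_neg, neg_mul_neg]

lemma single_pair_anticomm {C D : Matrix (Fin 2) (Fin 2) ℂ} (hCD : C * D = -(D * C))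
    {q q1 q2 : ι} (h12 : q1 ≠ q2) (hq : q = q1 ∨ q = q2) :
    pauliAt C q * (pauliAt D q1 * pauliAt D q2)
      = -((pauliAt D q1 * pauliAt D q2) * pauliAt C q) := by
  rcases hq with rfl | rfl
  · have L : pauliAt C q * (pauliAt D q * pauliAt D q2) = pauliAt (C * D) q * pauliAt D q2 := by
      rw [← mul_assoc, pauliAt_mul_same]
    have R : (pauliAt D q * pauliAt D q2) * pauliAt C q = pauliAt (D * C) q * pauliAt D q2 := by
      rw [mul_assoc, pauliAt_comm_of_ne D C h12.symm, ← mul_assoc, pauliAt_mul_same]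
    rw [L, R, hCD, pauliAt_neg, neg_mul]
  · have L : pauliAt C q * (pauliAt D q1 * pauliAt D q) = pauliAt D q1 * pauliAt (C * D) q := by
      rw [← mul_assoc, pauliAt_comm_of_ne C D (Ne.symm h12), mul_assoc, pauliAt_mul_same]
    have R : (pauliAt D q1 * pauliAt D q) * pauliAt C q = pauliAt D q1 * pauliAt (D * C) q := by
      rw [mul_assoc, pauliAt_mul_same]
    rw [L, R, hCD, pauliAt_neg, mul_neg]

lemma single_pair_comm {C D : Matrix (Fin 2) (Fin 2) ℂ} (hCD : C * D = D * C)
    {q q1 q2 : ι} (h12 : q1 ≠ q2) (hq : q = q1 ∨ q = q2) :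
    Commute (pauliAt C q) (pauliAt D q1 * pauliAt D q2) := by
  rcases hq with rfl | rfl
  · have L : pauliAt C q * (pauliAt D q * pauliAt D q2) = pauliAt (C * D) q * pauliAt D q2 := by
      rw [← mul_assoc, pauliAt_mul_same]
    have R : (pauliAt D q * pauliAt D q2) * pauliAt C q = pauliAt (D * C) q * pauliAt D q2 := by
      rw [mul_assoc, pauliAt_comm_of_ne D C h12.symm, ← mul_assoc, pauliAt_mul_same]
    show _ = _
    rw [L, R, hCD]
  · have L : pauliAt C q * (pauliAt D q1 * pauliAt D q) = pauliAt D q1 * pauliAt (C * D) q := by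
      rw [← mul_assoc, pauliAt_comm_of_ne C D (Ne.symm h12), mul_assoc, pauliAt_mul_same]
    have R : (pauliAt D q1 * pauliAt D q) * pauliAt C q = pauliAt D q1 * pauliAt (D * C) q := by
      rw [mul_assoc, pauliAt_mul_same]
    show _ = _
    rw [L, R, hCD]

end GadgetAux
namespace GadgetAux

variable {n : ℕ}

lemma tau_commute (t t' : TIdx n) : Commute (tauM t) (tauM t') := by
  by_cases hb : t.1 = t'.1
  · by_cases hp : t.2.1 = t'.2.1
    · by_cases he : t.2.2 = t'.2.2
      · have : t = t' := by
          rcases t with ⟨b, p, e⟩; rcases t' with ⟨b', p', e'⟩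
          simp_all
        rw [this]
      · obtain ⟨b, p, e⟩ := t
        obtain ⟨b', p', e'⟩ := t'
        simp only at hb hp he
        subst hb; subst hp
        unfold tauM
        simp only
        have hne : (b, pairQ p 0) ≠ (b, pairQ p 1) := by
          simp [Prod.ext_iff, pairQ_ne p]
        have hX : pmat true = PauliX := rfl
        have hZ : pmat false = PauliZ := rfl
        have hXZ : PauliX * PauliZ = -(PauliZ * PauliX) := by rw [PauliZX_anticomm, neg_neg]
        rcases e <;> rcases e'
        · exact absurd rfl he
        · rw [hX, hZ]; exact commute_pair_pair_same hne PauliZ PauliX PauliZX_anticomm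
        · rw [hX, hZ]; exact commute_pair_pair_same hne PauliX PauliZ hXZ
        · exact absurd rfl he
    · apply commute_pair_pair <;>
        (simp only [Ne, Prod.mk.injEq, not_and]; intro _; exact pairQ_ne_of_ne hp _ _)
  · apply commute_pair_pair <;> simp [Prod.ext_iff, hb]

lemma tau_sq (t : TIdx n) : tauM t * tauM t = 1 := by
  obtain ⟨b, p, e⟩ := t
  unfold tauM
  simp only
  rw [pair_mul_pair (by simp [Prod.ext_iff, pairQ_ne p]), pmat_mul_self, pauliAt_one, pauliAt_one,
    one_mul]

lemma tau_herm (t : TIdx n) : (tauM t)ᴴ = tauM t := by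
  obtain ⟨b, p, e⟩ := t
  unfold tauM
  simp only
  rw [Matrix.conjTranspose_mul, pauliAt_conjTranspose, pauliAt_conjTranspose, pmat_herm]
  exact pauliAt_comm_of_ne _ _ (by simp [Prod.ext_iff, (pairQ_ne p).symm] :
    ((b, pairQ p 1) : Fin n × Fin 4) ≠ (b, pairQ p 0))

end GadgetAux
namespace GadgetAux

variable {n : ℕ}

lemma Z_tau_commute (a : Fin n) (i : Fin 4) (t : TIdx n) (ht : t ≠ (a, pairOf i, true)) :
    Commute (pauliAt PauliZ ((a, i) : Fin n × Fin 4)) (tauM t) := by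
  obtain ⟨b, p, e⟩ := t
  by_cases hb : b = a
  · subst hb
    by_cases hp : p = pairOf i
    · subst hp
      cases e
      · apply single_pair_comm (show PauliZ * pmat false = pmat false * PauliZ from rfl)
          (by simp [Prod.ext_iff, pairQ_ne (pairOf i)])
        rcases eq_pairQ i with h | h
        · left; rw [← h]
        · right; rw [← h]
      · exact absurd rfl ht
    · apply commute_single_pair <;>
        exact fun hcon => (ne_pairQ_of_pair_ne (fun hh => hp hh.symm) _) (congrArg Prod.snd hcon)
  · apply commute_single_pair <;>
      exact fun hcon => hb (congrArg Prod.fst hcon).symm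

lemma Z_tau_anti (a : Fin n) (i : Fin 4) :
    pauliAt PauliZ ((a, i) : Fin n × Fin 4) * tauM (a, pairOf i, true)
      = -(tauM (a, pairOf i, true) * pauliAt PauliZ ((a, i) : Fin n × Fin 4)) := by
  apply single_pair_anticomm (show PauliZ * pmat true = -(pmat true * PauliZ) from PauliZX_anticomm)
    (by simp [Prod.ext_iff, pairQ_ne (pairOf i)])
  rcases eq_pairQ i with h | h
  · left; rw [← h]
  · right; rw [← h]

lemma X_tau_commute (b : Fin n) (j : Fin 4) (t : TIdx n) (ht : t ≠ (b, pairOf j, false)) :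
    Commute (pauliAt PauliX ((b, j) : Fin n × Fin 4)) (tauM t) := by
  obtain ⟨b', p, e⟩ := t
  by_cases hb : b' = b
  · subst hb
    by_cases hp : p = pairOf j
    · subst hp
      cases e
      · exact absurd rfl ht
      · apply single_pair_comm (show PauliX * pmat true = pmat true * PauliX from rfl)
          (by simp [Prod.ext_iff, pairQ_ne (pairOf j)])
        rcases eq_pairQ j with h | h
        · left; rw [← h]
        · right; rw [← h]
    · apply commute_single_pair <;>
        exact fun hcon => (ne_pairQ_of_pair_ne (fun hh => hp hh.symm) _) (congrArg Prod.snd hcon)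
  · apply commute_single_pair <;>
      exact fun hcon => hb (congrArg Prod.fst hcon).symm

lemma X_tau_anti (b : Fin n) (j : Fin 4) :
    pauliAt PauliX ((b, j) : Fin n × Fin 4) * tauM (b, pairOf j, false)
      = -(tauM (b, pairOf j, false) * pauliAt PauliX ((b, j) : Fin n × Fin 4)) := by
  have hXZ : PauliX * pmat false = -(pmat false * PauliX) := by
    show PauliX * PauliZ = -(PauliZ * PauliX)
    rw [PauliZX_anticomm, neg_neg]
  apply single_pair_anticomm hXZ (by simp [Prod.ext_iff, pairQ_ne (pairOf j)])
  rcases eq_pairQ j with h | h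
  · left; rw [← h]
  · right; rw [← h]

end GadgetAux
namespace GadgetAux

variable {n : ℕ}

def bsgn (e : Bool) : ℝ := if e then 1 else -1

lemma bsgn_sq (e : Bool) : (bsgn e : ℂ) * (bsgn e : ℂ) = 1 := by cases e <;> norm_num [bsgn]

lemma bsgn_not (e : Bool) : (bsgn (!e) : ℝ) = -(bsgn e : ℝ) := by cases e <;> norm_num [bsgn]

def projM (t : TIdx n) (e : Bool) : QMat n := (2⁻¹ : ℂ) • (1 + (bsgn e : ℂ) • tauM t)

lemma commute_projM_right {M : QMat n} {t : TIdx n} (h : Commute M (tauM t)) (e : Bool) :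
    Commute M (projM t e) :=
  ((Commute.one_right M).add_right (h.smul_right _)).smul_right _

lemma projM_commute (t t' : TIdx n) (e e' : Bool) : Commute (projM t e) (projM t' e') := by
  apply commute_projM_right
  apply Commute.smul_left
  exact (Commute.one_left _).add_left ((tau_commute t t').smul_left _)

lemma tau_mul_projM (t : TIdx n) (e : Bool) :
    tauM t * projM t e = (bsgn e : ℂ) • projM t e := by
  have hR : (bsgn e : ℂ) • projM t e = (2⁻¹ : ℂ) • ((bsgn e : ℂ) • 1 + tauM t) := by
    unfold projM
    rw [smul_smul, mul_comm, ← smul_smul, smul_add, smul_smul, bsgn_sq, one_smul]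
  rw [hR]
  unfold projM
  rw [Matrix.mul_smul, mul_add, mul_one, Matrix.mul_smul, tau_sq, add_comm]

lemma projM_mul_tau (t : TIdx n) (e : Bool) :
    projM t e * tauM t = (bsgn e : ℂ) • projM t e := by
  have hR : (bsgn e : ℂ) • projM t e = (2⁻¹ : ℂ) • ((bsgn e : ℂ) • 1 + tauM t) := by
    unfold projM
    rw [smul_smul, mul_comm, ← smul_smul, smul_add, smul_smul, bsgn_sq, one_smul]
  rw [hR]
  unfold projM
  rw [Matrix.smul_mul, add_mul, one_mul, Matrix.smul_mul, tau_sq, add_comm]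

end GadgetAux
namespace GadgetAux

variable {n : ℕ}

lemma projM_mul_projM (t : TIdx n) (e e' : Bool) :
    projM t e * projM t e' = if e = e' then projM t e else 0 := by
  have key : projM t e * projM t e'
      = (2⁻¹ : ℂ) • (projM t e' + ((bsgn e : ℂ) * (bsgn e' : ℂ)) • projM t e') := by
    conv_lhs => rw [projM]
    rw [Matrix.smul_mul, add_mul, one_mul, Matrix.smul_mul, tau_mul_projM, smul_smul]
  by_cases h : e = e'
  · subst h
    rw [key, bsgn_sq, one_smul, ← two_smul ℂ, smul_smul, if_pos rfl]
    norm_num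
  · rw [key, if_neg h]
    have : e' = !e := by cases e <;> cases e' <;> simp_all
    subst this
    rw [show ((bsgn e : ℝ) : ℂ) * ((bsgn (!e) : ℝ) : ℂ) = -1 by
      rw [show ((bsgn (!e) : ℝ) : ℂ) = -((bsgn e : ℝ) : ℂ) by exact_mod_cast congrArg (Complex.ofReal) (bsgn_not e), mul_neg, bsgn_sq]]
    rw [neg_one_smul, add_neg_cancel, smul_zero]

def PiM (s : TIdx n → Bool) : QMat n :=
  Finset.univ.noncommProd (fun t => projM t (s t)) (fun t _ t' _ _ => projM_commute t t' _ _)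

lemma PiM_factor_left (s : TIdx n → Bool) (t0 : TIdx n) :
    PiM s = projM t0 (s t0) *
      (Finset.univ.erase t0).noncommProd (fun t => projM t (s t))
        (fun t _ t' _ _ => projM_commute t t' _ _) :=
  (Finset.mul_noncommProd_erase Finset.univ (Finset.mem_univ t0) _ _).symm

lemma PiM_factor_right (s : TIdx n → Bool) (t0 : TIdx n) :
    PiM s = (Finset.univ.erase t0).noncommProd (fun t => projM t (s t))
        (fun t _ t' _ _ => projM_commute t t' _ _) * projM t0 (s t0) :=
  (Finset.noncommProd_erase_mul Finset.univ (Finset.mem_univ t0) _ _).symm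

lemma tau_mul_PiM (t : TIdx n) (s : TIdx n → Bool) :
    tauM t * PiM s = (bsgn (s t) : ℂ) • PiM s := by
  rw [PiM_factor_left s t, ← mul_assoc, tau_mul_projM, Matrix.smul_mul]

lemma PiM_mul_tau (t : TIdx n) (s : TIdx n → Bool) :
    PiM s * tauM t = (bsgn (s t) : ℂ) • PiM s := by
  rw [PiM_factor_right s t, mul_assoc, projM_mul_tau, Matrix.mul_smul,
    ← PiM_factor_right s t]

end GadgetAux
namespace GadgetAux

variable {n : ℕ}

lemma flip_PiM (M : QMat n) (t0 : TIdx n)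
    (hcomm : ∀ t, t ≠ t0 → Commute M (tauM t))
    (hanti : M * tauM t0 = -(tauM t0 * M)) (s : TIdx n → Bool) :
    M * PiM s = PiM (Function.update s t0 (! s t0)) * M := by
  set s' := Function.update s t0 (! s t0) with hs'
  have hst0 : s' t0 = ! s t0 := Function.update_self t0 _ s
  have hMP : M * projM t0 (s t0) = projM t0 (s' t0) * M := by
    rw [hst0, projM, projM, Matrix.mul_smul, Matrix.smul_mul, mul_add, add_mul, mul_one, one_mul,
      Matrix.mul_smul, Matrix.smul_mul, hanti]
    have : ((bsgn (! s t0) : ℝ) : ℂ) = -((bsgn (s t0) : ℝ) : ℂ) := by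
      rw [bsgn_not]; push_cast; ring
    rw [this, smul_neg, neg_smul]
  have hRest : Commute M ((Finset.univ.erase t0).noncommProd (fun t => projM t (s t))
      (fun t _ t' _ _ => projM_commute t t' _ _)) :=
    Finset.noncommProd_commute _ _ _ _
      (fun x hx => commute_projM_right (hcomm x (Finset.ne_of_mem_erase hx)) _)
  have hRestEq : (Finset.univ.erase t0).noncommProd (fun t => projM t (s t))
        (fun t _ t' _ _ => projM_commute t t' _ _)
      = (Finset.univ.erase t0).noncommProd (fun t => projM t (s' t))
        (fun t _ t' _ _ => projM_commute t t' _ _) := by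
    apply Finset.noncommProd_congr rfl
    intro x hx
    rw [hs', Function.update_of_ne (Finset.ne_of_mem_erase hx)]
  rw [PiM_factor_left s t0, PiM_factor_left s' t0, ← mul_assoc, hMP, mul_assoc, hRest.eq,
    ← mul_assoc, hRestEq]

lemma noncommProd_idem (F : Finset (TIdx n)) (f : TIdx n → QMat n)
    (hc : ∀ t t', Commute (f t) (f t')) (hi : ∀ t, f t * f t = f t) :
    F.noncommProd f (fun t _ t' _ _ => hc t t') * F.noncommProd f (fun t _ t' _ _ => hc t t')
      = F.noncommProd f (fun t _ t' _ _ => hc t t') := by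
  induction F using Finset.induction_on with
  | empty =>
    exact (congrArg₂ (· * ·) (Finset.noncommProd_empty _ _) (Finset.noncommProd_empty _ _)).trans
      ((mul_one 1).trans (Finset.noncommProd_empty _ _).symm)
  | @insert a F ha ih =>
    have hins : (insert a F).noncommProd f (fun t _ t' _ _ => hc t t')
        = f a * F.noncommProd f (fun t _ t' _ _ => hc t t') :=
      Finset.noncommProd_insert_of_notMem _ _ _ _ ha
    rw [hins]
    have hcP : Commute (f a) (F.noncommProd f (fun t _ t' _ _ => hc t t')) :=
      Finset.noncommProd_commute _ _ _ _ (fun x _ => hc a x)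
    calc f a * F.noncommProd f _ * (f a * F.noncommProd f _)
        = f a * (F.noncommProd f (fun t _ t' _ _ => hc t t') * f a) *
            F.noncommProd f (fun t _ t' _ _ => hc t t') := by
          rw [mul_assoc, mul_assoc, mul_assoc]
      _ = (f a * f a) * (F.noncommProd f (fun t _ t' _ _ => hc t t') *
            F.noncommProd f (fun t _ t' _ _ => hc t t')) := by
          rw [← hcP.eq, mul_assoc, mul_assoc, mul_assoc]
      _ = f a * F.noncommProd f (fun t _ t' _ _ => hc t t') := by rw [hi, ih]

lemma noncommProd_herm (F : Finset (TIdx n)) (f : TIdx n → QMat n)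
    (hc : ∀ t t', Commute (f t) (f t')) (hh : ∀ t, (f t)ᴴ = f t) :
    (F.noncommProd f (fun t _ t' _ _ => hc t t'))ᴴ
      = F.noncommProd f (fun t _ t' _ _ => hc t t') := by
  induction F using Finset.induction_on with
  | empty => exact Matrix.conjTranspose_one
  | @insert a F ha ih =>
    have hins : (insert a F).noncommProd f (fun t _ t' _ _ => hc t t')
        = f a * F.noncommProd f (fun t _ t' _ _ => hc t t') :=
      Finset.noncommProd_insert_of_notMem _ _ _ _ ha
    rw [hins, Matrix.conjTranspose_mul, ih, hh]
    exact (Finset.noncommProd_commute _ _ _ _ (fun x _ => hc a x)).eq.symm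

lemma projM_herm (t : TIdx n) (e : Bool) : (projM t e)ᴴ = projM t e := by
  unfold projM
  rw [Matrix.conjTranspose_smul, Matrix.conjTranspose_add, Matrix.conjTranspose_one,
    Matrix.conjTranspose_smul, tau_herm,
    show star ((bsgn e : ℝ) : ℂ) = ((bsgn e : ℝ) : ℂ) from Complex.conj_ofReal _,
    show star (2⁻¹ : ℂ) = 2⁻¹ by rw [star_inv₀, star_ofNat]]

lemma PiM_herm (s : TIdx n → Bool) : (PiM s)ᴴ = PiM s :=
  noncommProd_herm _ _ (fun t t' => projM_commute t t' _ _) (fun t => projM_herm t (s t))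

lemma PiM_mul_PiM (s s' : TIdx n → Bool) :
    PiM s * PiM s' = if s = s' then PiM s else 0 := by
  by_cases h : s = s'
  · subst h
    rw [if_pos rfl]
    exact noncommProd_idem _ _ (fun t t' => projM_commute t t' _ _)
      (fun t => by rw [projM_mul_projM, if_pos rfl])
  · rw [if_neg h]
    obtain ⟨t0, ht0⟩ := Function.ne_iff.mp h
    rw [PiM_factor_right s t0, PiM_factor_left s' t0, mul_assoc, ← mul_assoc (projM t0 (s t0)),
      projM_mul_projM, if_neg ht0, zero_mul, mul_zero]

end GadgetAux
namespace GadgetAux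

variable {n : ℕ}

lemma projM_add (t : TIdx n) : projM t true + projM t false = 1 := by
  unfold projM
  rw [← smul_add]
  have hb1 : ((bsgn true : ℝ) : ℂ) = 1 := by norm_num [bsgn]
  have hb2 : ((bsgn false : ℝ) : ℂ) = -1 := by norm_num [bsgn]
  rw [hb1, hb2, one_smul, neg_one_smul]
  have : (1 + tauM t) + (1 + -tauM t) = (1 : QMat n) + 1 := by abel
  rw [this, smul_add, ← add_smul]
  norm_num

def allTrueOff (F : Finset (TIdx n)) : Finset (TIdx n → Bool) :=
  Finset.univ.filter (fun s => ∀ t ∉ F, s t = true)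

lemma sum_PiM_restricted (F : Finset (TIdx n)) :
    ∑ s ∈ allTrueOff F,
      F.noncommProd (fun t => projM t (s t)) (fun t _ t' _ _ => projM_commute t t' _ _)
      = 1 := by
  induction F using Finset.induction_on with
  | empty =>
    have : allTrueOff (∅ : Finset (TIdx n)) = {fun _ => true} := by
      ext s
      simp only [allTrueOff, Finset.mem_filter, Finset.mem_univ, true_and,
        Finset.notMem_empty, not_false_iff, forall_true_left, Finset.mem_singleton]
      constructor
      · intro h; funext t; simp [h t]
      · intro h t; rw [h]
    rw [this, Finset.sum_singleton]; exact Finset.noncommProd_empty _ _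
  | @insert a F ha ih =>
    have hsplit : ∀ s : TIdx n → Bool,
        (insert a F).noncommProd (fun t => projM t (s t)) (fun t _ t' _ _ => projM_commute t t' _ _)
          = projM a (s a) * F.noncommProd (fun t => projM t (s t))
              (fun t _ t' _ _ => projM_commute t t' _ _) := by
      intro s
      exact Finset.noncommProd_insert_of_notMem _ _ _ _ ha
    rw [Finset.sum_congr rfl (fun s _ => hsplit s)]
    rw [← Finset.sum_filter_add_sum_filter_not (allTrueOff (insert a F)) (fun s => s a = true)]
    have hset1 : (allTrueOff (insert a F)).filter (fun s => s a = true) = allTrueOff F := by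
      ext s
      simp only [allTrueOff, Finset.mem_filter, Finset.mem_univ, true_and, Finset.mem_insert,
        not_or]
      constructor
      · rintro ⟨h1, h2⟩ t ht
        by_cases hta : t = a
        · subst hta; exact h2
        · exact h1 t ⟨hta, ht⟩
      · intro h
        refine ⟨fun t ht => h t ht.2, h a ha⟩
    have hbij : ∑ s ∈ (allTrueOff (insert a F)).filter (fun s => ¬ s a = true),
          projM a (s a) * F.noncommProd (fun t => projM t (s t))
            (fun t _ t' _ _ => projM_commute t t' _ _)
        = ∑ s ∈ allTrueOff F,
          projM a false * F.noncommProd (fun t => projM t (s t))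
            (fun t _ t' _ _ => projM_commute t t' _ _) := by
      apply Finset.sum_nbij' (i := fun s => Function.update s a true)
        (j := fun s => Function.update s a false)
      · intro s hs
        simp only [allTrueOff, Finset.mem_filter, Finset.mem_univ, true_and, Finset.mem_insert,
          not_or, Bool.not_eq_true] at hs ⊢
        intro t ht
        by_cases hta : t = a
        · subst hta; simp
        · rw [Function.update_of_ne hta]; exact hs.1 t ⟨hta, ht⟩
      · intro s hs
        simp only [allTrueOff, Finset.mem_filter, Finset.mem_univ, true_and, Finset.mem_insert,
          not_or, Bool.not_eq_true] at hs ⊢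
        constructor
        · intro t ht
          rw [Function.update_of_ne ht.1]
          exact hs t ht.2
        · simp
      · intro s hs
        simp only [allTrueOff, Finset.mem_filter, Finset.mem_univ, true_and,
          Bool.not_eq_true] at hs
        funext t
        by_cases hta : t = a
        · subst hta; simp [hs.2]
        · simp [Function.update_of_ne hta]
      · intro s hs
        simp only [allTrueOff, Finset.mem_filter, Finset.mem_univ, true_and] at hs
        funext t
        by_cases hta : t = a
        · subst hta; simp [hs _ ha]
        · simp [Function.update_of_ne hta]
      · intro s hs
        simp only [allTrueOff, Finset.mem_filter, Finset.mem_univ, true_and,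
          Bool.not_eq_true] at hs
        congr 1
        · rw [hs.2]
        · apply Finset.noncommProd_congr rfl
          intro t ht
          rw [Function.update_of_ne (fun h => ha (by rw [← h]; exact ht))]
    rw [hset1, hbij, ← Finset.sum_add_distrib]
    have : ∀ s ∈ allTrueOff F,
        projM a (s a) * F.noncommProd (fun t => projM t (s t))
            (fun t _ t' _ _ => projM_commute t t' _ _)
          + projM a false * F.noncommProd (fun t => projM t (s t))
            (fun t _ t' _ _ => projM_commute t t' _ _)
        = F.noncommProd (fun t => projM t (s t)) (fun t _ t' _ _ => projM_commute t t' _ _) := by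
      intro s hs
      simp only [allTrueOff, Finset.mem_filter, Finset.mem_univ, true_and] at hs
      have hsa := hs _ ha
      rw [hsa, ← add_mul, projM_add, one_mul]
    rw [Finset.sum_congr rfl this, ih]

lemma sum_PiM : ∑ s : TIdx n → Bool, PiM s = 1 := by
  have h1 : allTrueOff (Finset.univ : Finset (TIdx n)) = Finset.univ := by
    ext s; simp [allTrueOff]
  have := sum_PiM_restricted (Finset.univ : Finset (TIdx n))
  rw [h1] at this
  exact this

end GadgetAux
namespace GadgetAux

variable {n : ℕ}

def Esgn (gx gz : Fin n → ℝ) (s : TIdx n → Bool) : ℝ :=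
  ∑ t : TIdx n, coef gx gz t * bsgn (s t)

lemma H_mul_PiM (gx gz : Fin n → ℝ) (s : TIdx n → Bool) :
    HpenBlocks n gx gz * PiM s = ((Esgn gx gz s : ℝ) : ℂ) • PiM s := by
  rw [Hpen_eq, Finset.sum_mul]
  have : ∀ t : TIdx n, ((coef gx gz t : ℝ) : ℂ) • tauM t * PiM s
      = (((coef gx gz t * bsgn (s t) : ℝ)) : ℂ) • PiM s := by
    intro t
    rw [Matrix.smul_mul, tau_mul_PiM, smul_smul]
    push_cast
    ring_nf
  rw [Finset.sum_congr rfl (fun t _ => this t), ← Finset.sum_smul]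
  congr 1
  push_cast [Esgn]
  ring

lemma PiM_mul_H (gx gz : Fin n → ℝ) (s : TIdx n → Bool) :
    PiM s * HpenBlocks n gx gz = ((Esgn gx gz s : ℝ) : ℂ) • PiM s := by
  rw [Hpen_eq, Finset.mul_sum]
  have : ∀ t : TIdx n, PiM s * (((coef gx gz t : ℝ) : ℂ) • tauM t)
      = (((coef gx gz t * bsgn (s t) : ℝ)) : ℂ) • PiM s := by
    intro t
    rw [Matrix.mul_smul, PiM_mul_tau, smul_smul]
    push_cast
    ring_nf
  rw [Finset.sum_congr rfl (fun t _ => this t), ← Finset.sum_smul]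
  congr 1
  push_cast [Esgn]
  ring

def zeroS (gx gz : Fin n → ℝ) : Finset (TIdx n → Bool) :=
  Finset.univ.filter (fun s => Esgn gx gz s = 0)

def Qz (gx gz : Fin n → ℝ) : QMat n := ∑ s ∈ zeroS gx gz, PiM s

def Gz (gx gz : Fin n → ℝ) : QMat n :=
  ∑ s ∈ Finset.univ.filter (fun s => Esgn gx gz s ≠ 0), (((Esgn gx gz s)⁻¹ : ℝ) : ℂ) • PiM s

lemma Qz_mul_PiM (gx gz : Fin n → ℝ) (s : TIdx n → Bool) :
    Qz gx gz * PiM s = if Esgn gx gz s = 0 then PiM s else 0 := by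
  rw [Qz, Finset.sum_mul, Finset.sum_congr rfl (fun u _ => PiM_mul_PiM u s)]
  rw [Finset.sum_ite_eq' (zeroS gx gz) s PiM]
  simp [zeroS]

lemma PiM_mul_Qz (gx gz : Fin n → ℝ) (s : TIdx n → Bool) :
    PiM s * Qz gx gz = if Esgn gx gz s = 0 then PiM s else 0 := by
  rw [Qz, Finset.mul_sum, Finset.sum_congr rfl (fun u _ => PiM_mul_PiM s u)]
  rw [Finset.sum_ite_eq (zeroS gx gz) s (fun _ => PiM s)]
  simp [zeroS]

lemma Qz_herm (gx gz : Fin n → ℝ) : (Qz gx gz)ᴴ = Qz gx gz := by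
  rw [Qz, Matrix.conjTranspose_sum]
  exact Finset.sum_congr rfl (fun s _ => PiM_herm s)

lemma one_sub_Qz (gx gz : Fin n → ℝ) :
    (1 : QMat n) - Qz gx gz = ∑ s ∈ Finset.univ.filter (fun s => Esgn gx gz s ≠ 0), PiM s := by
  have := Finset.sum_filter_add_sum_filter_not Finset.univ (fun s => Esgn gx gz s = 0) PiM
  rw [sum_PiM] at this
  rw [sub_eq_iff_eq_add]
  rw [← this]
  rw [add_comm]
  rfl

lemma Gz_mul_H (gx gz : Fin n → ℝ) :
    Gz gx gz * HpenBlocks n gx gz = 1 - Qz gx gz := by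
  rw [Gz, Finset.sum_mul, one_sub_Qz]
  apply Finset.sum_congr rfl
  intro s hs
  simp only [Finset.mem_filter, Finset.mem_univ, true_and] at hs
  rw [Matrix.smul_mul, PiM_mul_H, smul_smul]
  rw [show (((Esgn gx gz s)⁻¹ : ℝ) : ℂ) * ((Esgn gx gz s : ℝ) : ℂ) = 1 by
    rw [← Complex.ofReal_mul, inv_mul_cancel₀ hs, Complex.ofReal_one], one_smul]

lemma Gz_mul_Qz (gx gz : Fin n → ℝ) : Gz gx gz * Qz gx gz = 0 := by
  rw [Gz, Finset.sum_mul]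
  apply Finset.sum_eq_zero
  intro s hs
  simp only [Finset.mem_filter, Finset.mem_univ, true_and] at hs
  rw [Matrix.smul_mul, PiM_mul_Qz, if_neg hs, smul_zero]

lemma H_mul_Qz (gx gz : Fin n → ℝ) : HpenBlocks n gx gz * Qz gx gz = 0 := by
  rw [Qz, Finset.mul_sum]
  apply Finset.sum_eq_zero
  intro s hs
  simp only [zeroS, Finset.mem_filter, Finset.mem_univ, true_and] at hs
  rw [H_mul_PiM, hs, Complex.ofReal_zero, zero_smul]

lemma H_herm (gx gz : Fin n → ℝ) : (HpenBlocks n gx gz)ᴴ = HpenBlocks n gx gz := by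
  rw [Hpen_eq, Matrix.conjTranspose_sum]
  apply Finset.sum_congr rfl
  intro t _
  rw [Matrix.conjTranspose_smul, tau_herm, Complex.star_def, Complex.conj_ofReal]

lemma Esgn_upd (gx gz : Fin n → ℝ) (s : TIdx n → Bool) (t : TIdx n) :
    Esgn gx gz (Function.update s t (! s t))
      = Esgn gx gz s - 2 * coef gx gz t * bsgn (s t) := by
  unfold Esgn
  have hfun : (fun x => coef gx gz x * bsgn (Function.update s t (! s t) x))
      = Function.update (fun x => coef gx gz x * bsgn (s x)) t
          (coef gx gz t * bsgn (! s t)) := by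
    funext x
    by_cases hx : x = t
    · subst hx; simp
    · rw [Function.update_of_ne hx, Function.update_of_ne hx]
  rw [hfun, Finset.sum_update_of_mem (Finset.mem_univ t)]
  rw [Finset.sum_eq_add_sum_sdiff_singleton_of_mem (Finset.mem_univ t)
    (fun x => coef gx gz x * bsgn (s x))]
  have : (bsgn (! s t) : ℝ) = -(bsgn (s t) : ℝ) := by cases s t <;> simp [bsgn]
  rw [this]
  ring

end GadgetAux
namespace GadgetAux

variable {n : ℕ}

lemma eq_of_mulVec {M N : QMat n} (h : ∀ v, M.mulVec v = N.mulVec v) : M = N := by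
  ext f g
  have := congrFun (h (Pi.single g 1)) f
  simpa [Matrix.mulVec_single] using this

def flipAt (s : TIdx n → Bool) (t : TIdx n) : TIdx n → Bool := Function.update s t (! s t)

lemma flip_PiM' (M : QMat n) (t0 : TIdx n)
    (hcomm : ∀ t, t ≠ t0 → Commute M (tauM t))
    (hanti : M * tauM t0 = -(tauM t0 * M)) (s : TIdx n → Bool) :
    M * PiM s = PiM (flipAt s t0) * M :=
  flip_PiM M t0 hcomm hanti s

lemma flipAt_coef (gx gz : Fin n → ℝ) (b : Fin n) (p : Fin 2) :
    coef gx gz ((b, p, false) : TIdx n) = gz b := rfl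

lemma Esgn_flipAt (gx gz : Fin n → ℝ) (s : TIdx n → Bool) (t : TIdx n) :
    Esgn gx gz (flipAt s t) = Esgn gx gz s - 2 * coef gx gz t * bsgn (s t) :=
  Esgn_upd gx gz s t

lemma energy_contra (gx gz : Fin n → ℝ) {b c : Fin n} (pb pc : Fin 2)
    (hbc : b ≠ c) (hgz : |gz b| ≠ |gz c|) (w : TIdx n → Bool)
    (hw : Esgn gx gz w = 0) :
    Esgn gx gz (flipAt (flipAt w (c, pc, false)) (b, pb, false)) ≠ 0 := by
  intro h0
  have hne : ((b, pb, false) : TIdx n) ≠ (c, pc, false) := fun h => hbc (congrArg Prod.fst h)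
  have e1 := Esgn_flipAt gx gz w (c, pc, false)
  have e2 := Esgn_flipAt gx gz (flipAt w (c, pc, false)) (b, pb, false)
  have hv : flipAt w (c, pc, false) (b, pb, false) = w (b, pb, false) := by
    rw [flipAt, Function.update_of_ne hne]
  rw [hv, e1, hw, flipAt_coef, flipAt_coef] at e2
  rw [e2] at h0
  have hb1 : bsgn (w (b, pb, false)) = 1 ∨ bsgn (w (b, pb, false)) = -1 := by
    cases w (b, pb, false) <;> simp [bsgn]
  have hc1 : bsgn (w (c, pc, false)) = 1 ∨ bsgn (w (c, pc, false)) = -1 := by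
    cases w (c, pc, false) <;> simp [bsgn]
  apply hgz
  rcases hb1 with hb | hb <;> rcases hc1 with hc | hc <;> rw [hb, hc] at h0
  · have : gz b = -gz c := by linarith
    rw [this, abs_neg]
  · have : gz b = gz c := by linarith
    rw [this]
  · have : gz b = gz c := by linarith
    rw [this]
  · have : gz b = -gz c := by linarith
    rw [this, abs_neg]

lemma main (gx gz : Fin n → ℝ)
    (P₀ Hinv : QMat n)
    (hsa : P₀.IsHermitian) (hidem : P₀ * P₀ = P₀)
    (hker : ∀ v : (Fin n × Fin 4 → Fin 2) → ℂ,
      (HpenBlocks n gx gz).mulVec v = 0 ↔ P₀.mulVec v = v)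
    (hinv1 : Hinv = (1 - P₀) * Hinv * (1 - P₀))
    (hinv3 : HpenBlocks n gx gz * Hinv = 1 - P₀)
    (a b c : Fin n) (hab : a ≠ b) (hac : a ≠ c) (hbc : b ≠ c)
    (hgzbc : |gz b| ≠ |gz c|)
    (i j k : Fin 4) :
    P₀ * (pauliAt PauliZ (a, i) * pauliAt PauliX (b, j)) * Hinv *
        (pauliAt PauliZ (a, i) * pauliAt PauliX (c, k)) * P₀ = 0 := by
  set H := HpenBlocks n gx gz with hH
  -- P₀ = Qz
  have hHP0 : H * P₀ = 0 := by
    apply eq_of_mulVec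
    intro v
    rw [← Matrix.mulVec_mulVec, Matrix.zero_mulVec]
    apply (hker _).mpr
    rw [Matrix.mulVec_mulVec, hidem]
  have hP0H : P₀ * H = 0 := by
    have : (P₀ * H)ᴴ = 0 := by
      rw [Matrix.conjTranspose_mul, H_herm, hsa.eq, hHP0]
    calc P₀ * H = ((P₀ * H)ᴴ)ᴴ := (Matrix.conjTranspose_conjTranspose _).symm
      _ = 0 := by rw [this, Matrix.conjTranspose_zero]
  have hP0Pi : ∀ s ∈ zeroS gx gz, P₀ * PiM s = PiM s := by
    intro s hs
    simp only [zeroS, Finset.mem_filter, Finset.mem_univ, true_and] at hs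
    apply eq_of_mulVec
    intro v
    rw [← Matrix.mulVec_mulVec]
    apply (hker _).mp
    rw [Matrix.mulVec_mulVec, hH, H_mul_PiM, hs, Complex.ofReal_zero, zero_smul,
      Matrix.zero_mulVec]
  have hP0Q : P₀ * Qz gx gz = Qz gx gz := by
    rw [Qz, Finset.mul_sum]
    exact Finset.sum_congr rfl hP0Pi
  have hQP0 : Qz gx gz * P₀ = P₀ := by
    have h1 : (1 - Qz gx gz) * P₀ = 0 := by
      rw [← Gz_mul_H gx gz, mul_assoc, ← hH, hHP0, mul_zero]
    have h2 : P₀ - Qz gx gz * P₀ = 0 := by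
      rw [← h1, sub_mul, one_mul]
    exact (sub_eq_zero.mp h2).symm
  have hP0Qz : P₀ = Qz gx gz := by
    calc P₀ = P₀ᴴ := hsa.symm
      _ = (Qz gx gz * P₀)ᴴ := by rw [hQP0]
      _ = P₀ᴴ * (Qz gx gz)ᴴ := Matrix.conjTranspose_mul _ _
      _ = P₀ * Qz gx gz := by rw [hsa.eq, Qz_herm]
      _ = Qz gx gz := hP0Q
  -- Hinv = Gz
  have hHinv : Hinv = Gz gx gz := by
    have hGH : Gz gx gz * H = 1 - P₀ := by rw [hH, hP0Qz]; exact Gz_mul_H gx gz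
    have h1 : (1 - P₀) * Hinv = Gz gx gz * (1 - P₀) := by
      calc (1 - P₀) * Hinv = Gz gx gz * H * Hinv := by rw [hGH]
        _ = Gz gx gz * (H * Hinv) := mul_assoc _ _ _
        _ = Gz gx gz * (1 - P₀) := by rw [hinv3]
    have hsub : ((1 : QMat n) - P₀) * (1 - P₀) = 1 - P₀ := by
      rw [sub_mul, one_mul, mul_sub, mul_one, hidem]
      abel
    calc Hinv = (1 - P₀) * Hinv * (1 - P₀) := hinv1
      _ = Gz gx gz * (1 - P₀) * (1 - P₀) := by rw [h1]
      _ = Gz gx gz * ((1 - P₀) * (1 - P₀)) := by rw [mul_assoc]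
      _ = Gz gx gz * (1 - P₀) := by rw [hsub]
      _ = Gz gx gz - Gz gx gz * Qz gx gz := by rw [mul_sub, mul_one, hP0Qz]
      _ = Gz gx gz := by rw [Gz_mul_Qz, sub_zero]
  -- notation
  set Za := pauliAt PauliZ ((a, i) : Fin n × Fin 4) with hZa'
  set Xb := pauliAt PauliX ((b, j) : Fin n × Fin 4) with hXb'
  set Xc := pauliAt PauliX ((c, k) : Fin n × Fin 4) with hXc'
  set tA : TIdx n := (a, pairOf i, true) with htA
  set tB : TIdx n := (b, pairOf j, false) with htB
  set tC : TIdx n := (c, pairOf k, false) with htC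
  have hZaP : ∀ s, Za * PiM s = PiM (flipAt s tA) * Za :=
    flip_PiM' Za tA (fun t ht => Z_tau_commute a i t ht) (Z_tau_anti a i)
  have hXbP : ∀ s, Xb * PiM s = PiM (flipAt s tB) * Xb :=
    flip_PiM' Xb tB (fun t ht => X_tau_commute b j t ht) (X_tau_anti b j)
  have hXcP : ∀ s, Xc * PiM s = PiM (flipAt s tC) * Xc :=
    flip_PiM' Xc tC (fun t ht => X_tau_commute c k t ht) (X_tau_anti c k)
  have hA : ∀ s, (Za * Xb) * PiM s = PiM (flipAt (flipAt s tB) tA) * (Za * Xb) := by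
    intro s
    rw [mul_assoc, hXbP s, ← mul_assoc, hZaP (flipAt s tB), mul_assoc]
  have hXbXc : ∀ s, (Xb * Xc) * PiM s = PiM (flipAt (flipAt s tC) tB) * (Xb * Xc) := by
    intro s
    rw [mul_assoc, hXcP s, ← mul_assoc, hXbP (flipAt s tC), mul_assoc]
  have hABeq : (Za * Xb) * (Za * Xc) = Xb * Xc := by
    have hcomm : Xb * Za = Za * Xb := by
      rw [hZa', hXb']
      exact pauliAt_comm_of_ne PauliX PauliZ (fun h => hab (congrArg Prod.fst h).symm)
    have h1 : (Za * Xb) * Za = Xb := by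
      rw [mul_assoc, hcomm, ← mul_assoc, hZa', pauliAt_mul_same, PauliZ_mul_self, pauliAt_one,
        one_mul]
    rw [← mul_assoc, h1]
  -- the key vanishing
  have key : ∀ s : TIdx n → Bool,
      ((Qz gx gz * (Za * Xb)) * PiM s) * ((Za * Xc) * Qz gx gz) = 0 := by
    intro s
    rw [mul_assoc (Qz gx gz), hA s, ← mul_assoc (Qz gx gz), Qz_mul_PiM]
    by_cases hE : Esgn gx gz (flipAt (flipAt s tB) tA) = 0
    · rw [if_pos hE]
      have hstep : (Za * Xb) * ((Za * Xc) * Qz gx gz) = (Xb * Xc) * Qz gx gz := by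
        rw [← mul_assoc, hABeq]
      rw [mul_assoc (PiM _), hstep, Qz, Finset.mul_sum, Finset.mul_sum]
      apply Finset.sum_eq_zero
      intro w hw
      simp only [zeroS, Finset.mem_filter, Finset.mem_univ, true_and] at hw
      rw [hXbXc w, ← mul_assoc, PiM_mul_PiM]
      have hne : flipAt (flipAt s tB) tA ≠ flipAt (flipAt w tC) tB := by
        intro hcon
        apply energy_contra gx gz (pairOf j) (pairOf k) hbc hgzbc w hw
        rw [htB, htC] at hcon
        rw [← hcon]
        exact hE
      rw [if_neg hne, zero_mul]
    · rw [if_neg hE, zero_mul, zero_mul]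
  -- assemble
  rw [hP0Qz, hHinv]
  rw [mul_assoc _ (Za * Xc), Gz, Finset.mul_sum, Finset.sum_mul]
  apply Finset.sum_eq_zero
  intro s _
  rw [Matrix.mul_smul, Matrix.smul_mul, key s, smul_zero]

end GadgetAux

end GadgetProofAux

/-- Two gadget terms `A = Z_i⁽ᵃ⁾X_j⁽ᵇ⁾` and `B = Z_i⁽ᵃ⁾X_k⁽ᶜ⁾` sharing the same physical
`Z` qubit in block `a` generate no second-order transitions within the zero-eigenspace
provided `|g_z⁽ᵇ⁾| ≠ |g_z⁽ᶜ⁾|`: then `P₀ A H_pen⁻¹ B P₀ = 0` and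
`P₀ B H_pen⁻¹ A P₀ = 0`. -/
theorem gadget_coexist_overlap_qubit (n : ℕ) (gx gz : Fin n → ℝ)
    (P₀ Hinv : Matrix (Fin n × Fin 4 → Fin 2) (Fin n × Fin 4 → Fin 2) ℂ)
    (hsa : P₀.IsHermitian) (hidem : P₀ * P₀ = P₀)
    (hker : ∀ v : (Fin n × Fin 4 → Fin 2) → ℂ,
      (HpenBlocks n gx gz).mulVec v = 0 ↔ P₀.mulVec v = v)
    (hinv1 : Hinv = (1 - P₀) * Hinv * (1 - P₀))
    (hinv2 : Hinv * HpenBlocks n gx gz = 1 - P₀)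
    (hinv3 : HpenBlocks n gx gz * Hinv = 1 - P₀)
    (a b c : Fin n) (hab : a ≠ b) (hac : a ≠ c) (hbc : b ≠ c)
    (hgzbc : |gz b| ≠ |gz c|)
    (i j k : Fin 4) :
    P₀ * (pauliAt PauliZ (a, i) * pauliAt PauliX (b, j)) * Hinv *
        (pauliAt PauliZ (a, i) * pauliAt PauliX (c, k)) * P₀ = 0 ∧
    P₀ * (pauliAt PauliZ (a, i) * pauliAt PauliX (c, k)) * Hinv *
        (pauliAt PauliZ (a, i) * pauliAt PauliX (b, j)) * P₀ = 0 := by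
  constructor
  · exact GadgetAux.main gx gz P₀ Hinv hsa hidem hker hinv1 hinv3 a b c hab hac hbc hgzbc i j k
  · exact GadgetAux.main gx gz P₀ Hinv hsa hidem hker hinv1 hinv3 a c b hac hab hbc.symm
      (fun h => hgzbc h.symm) i k j

end
end

section
/- Let H₀ be Hermitian with zero-eigenspace projector P₀ and pseudoinverse R₀, spectral gap Δ, and W Hermitian with κ = ‖W‖/Δ ≤ 1/4. Define recursively S⁽¹⁾ := −Q₀WR₀WP₀ + R₀WP₀WP₀ − R₀WP₀WR₀WP₀ and S⁽ℓ⁺¹⁾ := −Q₀WR₀S⁽ℓ⁾ + R₀S⁽ℓ⁾WP₀ − R₀S⁽ℓ⁾WR₀WP₀. Then for every ℓ ≥ 1, S⁽ℓ⁾ = Q₀S⁽ℓ⁾P₀ and ‖S⁽ℓ⁾‖ ≤ (2κ+κ²)^ℓ ‖Q₀WP₀‖; consequently the series Σ_{ℓ≥1} S⁽ℓ⁾ converges absolutely with ‖Σ_{ℓ=1}^∞ S⁽ℓ⁾‖ ≤ (2κ+κ²)/(1−2κ−κ²) ‖Q₀WP₀‖ ≤ (36/7)κ‖Q₀WP₀‖.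 -/
lemma S_gap_lower
    {E : Type*} [NormedAddCommGroup E] [InnerProductSpace ℂ E] [FiniteDimensional ℂ E]
    (H₀ P₀ : E →L[ℂ] E) (Δ : ℝ) (hΔ : 0 < Δ)
    (hH₀ : IsSelfAdjoint H₀)
    (hP₀sa : IsSelfAdjoint P₀)
    (hP₀ker : ∀ x : E, H₀ x = 0 ↔ P₀ x = x)
    (hgap : ∀ μ ∈ spectrum ℂ H₀, μ ≠ 0 → Δ ≤ ‖μ‖) :
    ∀ y : E, P₀ y = 0 → Δ * ‖y‖ ≤ ‖H₀ y‖ := by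
  intro y hy
  have hsym : (H₀ : E →ₗ[ℂ] E).IsSymmetric := hH₀.isSymmetric
  set n := Module.finrank ℂ E with hn'
  have hn : Module.finrank ℂ E = n := rfl
  set b := hsym.eigenvectorBasis hn with hb
  set μ := hsym.eigenvalues hn with hμ
  have hkey : ∀ i, Δ ^ 2 * ‖b.repr y i‖ ^ 2 ≤ ‖b.repr (H₀ y) i‖ ^ 2 := by
    intro i
    have happ : H₀ (b i) = (μ i : ℂ) • b i := hsym.apply_eigenvectorBasis hn i
    have hrepr : b.repr (H₀ y) i = (μ i : ℂ) * b.repr y i :=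
      hsym.eigenvectorBasis_apply_self_apply hn y i
    rw [hrepr]
    by_cases hzero : μ i = 0
    · have hker : H₀ (b i) = 0 := by rw [happ, hzero]; simp
      have hfix : P₀ (b i) = b i := (hP₀ker (b i)).mp hker
      have : b.repr y i = 0 := by
        rw [OrthonormalBasis.repr_apply_apply, ← hfix]
        calc (inner ℂ (P₀ (b i)) y : ℂ) = inner ℂ (b i) (P₀ y) := hP₀sa.isSymmetric _ _
          _ = 0 := by rw [hy, inner_zero_right]
      rw [this, hzero]
      simp
    · have hmem : (μ i : ℂ) ∈ spectrum ℂ H₀ := by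
        rw [spectrum.mem_iff]
        intro hunit
        obtain ⟨u, hu⟩ := hunit
        have hv : (algebraMap ℂ (E →L[ℂ] E) (μ i) - H₀) (b i) = 0 := by
          rw [Algebra.algebraMap_eq_smul_one]
          simp [happ]
        have : b i = 0 := by
          have h1 : ((↑u⁻¹ : E →L[ℂ] E) * (↑u : E →L[ℂ] E)) (b i) = b i := by
            rw [u.inv_mul]; rfl
          rw [ContinuousLinearMap.mul_apply, hu, hv, map_zero] at h1
          exact h1.symm
        exact b.orthonormal.ne_zero i this
      have hge : Δ ≤ |μ i| := by
        have := hgap _ hmem (by exact_mod_cast hzero)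
        rwa [Complex.norm_real, Real.norm_eq_abs] at this
      have h0 : (0:ℝ) ≤ ‖b.repr y i‖ := norm_nonneg _
      have : ‖(μ i : ℂ) * b.repr y i‖ = |μ i| * ‖b.repr y i‖ := by
        rw [norm_mul, Complex.norm_real, Real.norm_eq_abs]
      rw [this, mul_pow]
      have : Δ ^ 2 ≤ |μ i| ^ 2 := by nlinarith [abs_nonneg (μ i)]
      nlinarith [sq_nonneg (‖b.repr y i‖)]
  have hsum : ∀ z : E, ‖z‖ ^ 2 = ∑ i, ‖b.repr z i‖ ^ 2 := by
    intro z
    rw [← b.repr.norm_map z, EuclideanSpace.norm_eq,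
      Real.sq_sqrt (Finset.sum_nonneg fun i _ => sq_nonneg _)]
  have hfin : Δ ^ 2 * ‖y‖ ^ 2 ≤ ‖H₀ y‖ ^ 2 := by
    rw [hsum y, hsum (H₀ y), Finset.mul_sum]
    exact Finset.sum_le_sum fun i _ => hkey i
  nlinarith [norm_nonneg (H₀ y), mul_nonneg hΔ.le (norm_nonneg y)]

lemma S_numeric_aux (κ a : ℝ) (hκ0 : 0 ≤ κ) (hκ4 : κ ≤ 1 / 4) (ha0 : 0 ≤ a) :
    (2 * κ + κ ^ 2) / (1 - (2 * κ + κ ^ 2)) * a ≤ 36 / 7 * κ * a := by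
  have h7 : (0:ℝ) < 1 - (2 * κ + κ ^ 2) := by nlinarith
  have hfrac : (2 * κ + κ ^ 2) / (1 - (2 * κ + κ ^ 2)) ≤ 36 / 7 * κ := by
    have key : 0 ≤ κ * ((1 - 4 * κ) * (9 * κ + 22)) :=
      mul_nonneg hκ0 (mul_nonneg (by linarith) (by linarith))
    rw [div_le_iff₀ h7]
    nlinarith [key]
  exact mul_le_mul_of_nonneg_right hfrac ha0



/-- The recursively defined operators `S⁽ℓ⁾` satisfy `S⁽ℓ⁾ = Q₀S⁽ℓ⁾P₀` and
`‖S⁽ℓ⁾‖ ≤ (2κ+κ²)^ℓ ‖Q₀WP₀‖`, and the series `Σ_{ℓ≥1} S⁽ℓ⁾` converges absolutely with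
`‖Σ_{ℓ=1}^∞ S⁽ℓ⁾‖ ≤ (2κ+κ²)/(1-2κ-κ²)‖Q₀WP₀‖ ≤ (36/7)κ‖Q₀WP₀‖`. -/
theorem S_series_bounds
    {E : Type*} [NormedAddCommGroup E] [InnerProductSpace ℂ E] [FiniteDimensional ℂ E]
    (H₀ W P₀ R₀ : E →L[ℂ] E) (Δ : ℝ) (hΔ : 0 < Δ)
    (hH₀ : IsSelfAdjoint H₀) (hW : IsSelfAdjoint W)
    (hP₀sa : IsSelfAdjoint P₀) (hP₀idem : P₀ * P₀ = P₀)
    (hP₀ker : ∀ x : E, H₀ x = 0 ↔ P₀ x = x)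
    (hgap : ∀ μ ∈ spectrum ℂ H₀, μ ≠ 0 → Δ ≤ ‖μ‖)
    (hR₀ : R₀ = (1 - P₀) * R₀ * (1 - P₀))
    (hR₀H₀ : R₀ * H₀ = 1 - P₀) (hH₀R₀ : H₀ * R₀ = 1 - P₀)
    (κ : ℝ) (hκ : κ = ‖W‖ / Δ) (hκ4 : κ ≤ 1 / 4)
    (S : ℕ → (E →L[ℂ] E))
    (hS1 : S 1 = -((1 - P₀) * W * R₀ * W * P₀) + R₀ * W * P₀ * W * P₀
        - R₀ * W * P₀ * W * R₀ * W * P₀)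
    (hSrec : ∀ ℓ ≥ 1, S (ℓ + 1) = -((1 - P₀) * W * R₀ * S ℓ) + R₀ * S ℓ * W * P₀
        - R₀ * S ℓ * W * R₀ * W * P₀) :
    (∀ ℓ ≥ 1, S ℓ = (1 - P₀) * S ℓ * P₀ ∧
        ‖S ℓ‖ ≤ (2 * κ + κ ^ 2) ^ ℓ * ‖(1 - P₀) * W * P₀‖) ∧
    Summable (fun ℓ : ℕ => ‖S (ℓ + 1)‖) ∧
    ‖∑' ℓ : ℕ, S (ℓ + 1)‖ ≤ (2 * κ + κ ^ 2) / (1 - (2 * κ + κ ^ 2)) * ‖(1 - P₀) * W * P₀‖ ∧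
    (2 * κ + κ ^ 2) / (1 - (2 * κ + κ ^ 2)) * ‖(1 - P₀) * W * P₀‖
      ≤ 36 / 7 * κ * ‖(1 - P₀) * W * P₀‖ := by
  set Q₀ : E →L[ℂ] E := 1 - P₀ with hQ₀def
  -- basic algebra
  have hQ₀sa : IsSelfAdjoint Q₀ := (IsSelfAdjoint.one (R := E →L[ℂ] E)).sub hP₀sa
  have hQ₀idem : Q₀ * Q₀ = Q₀ := by
    simp only [hQ₀def, mul_sub, sub_mul, one_mul, mul_one, hP₀idem]
    abel
  have hPQ : P₀ * Q₀ = 0 := by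
    simp only [hQ₀def, mul_sub, mul_one, hP₀idem, sub_self]
  have hQR : Q₀ * R₀ = R₀ := by
    rw [hR₀]; simp only [← hQ₀def, ← mul_assoc, hQ₀idem]
  have hRQ : R₀ * Q₀ = R₀ := by
    rw [hR₀]; simp only [← hQ₀def, mul_assoc, hQ₀idem]
  have hPR : P₀ * R₀ = 0 := by
    rw [hR₀]; simp only [← hQ₀def, ← mul_assoc, hPQ, zero_mul]
  -- norms of projections
  have proj_norm : ∀ T : E →L[ℂ] E, IsSelfAdjoint T → T * T = T → ‖T‖ ≤ 1 := by
    intro T hsa hidem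
    have h := CStarRing.norm_star_mul_self (x := T)
    rw [hsa.star_eq, hidem] at h
    nlinarith [norm_nonneg T]
  have hPn : ‖P₀‖ ≤ 1 := proj_norm P₀ hP₀sa hP₀idem
  have hQn : ‖Q₀‖ ≤ 1 := proj_norm Q₀ hQ₀sa hQ₀idem
  -- resolvent bound
  have hRn : ‖R₀‖ ≤ Δ⁻¹ := by
    apply ContinuousLinearMap.opNorm_le_bound _ (by positivity)
    intro x
    have h1 : P₀ (R₀ x) = 0 := by
      have := congrArg (fun T : E →L[ℂ] E => T x) hPR
      simpa using this
    have h2 : Δ * ‖R₀ x‖ ≤ ‖H₀ (R₀ x)‖ :=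
      S_gap_lower H₀ P₀ Δ hΔ hH₀ hP₀sa hP₀ker hgap _ h1
    have h3 : H₀ (R₀ x) = Q₀ x := by
      have := congrArg (fun T : E →L[ℂ] E => T x) hH₀R₀
      simpa [← hQ₀def] using this
    have h4 : ‖Q₀ x‖ ≤ ‖x‖ := by
      calc ‖Q₀ x‖ ≤ ‖Q₀‖ * ‖x‖ := Q₀.le_opNorm x
        _ ≤ 1 * ‖x‖ := by gcongr
        _ = ‖x‖ := one_mul _
    rw [h3] at h2
    rw [inv_mul_eq_div, le_div_iff₀ hΔ, mul_comm]
    exact h2.trans h4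
  -- scalars
  have hκ0 : 0 ≤ κ := hκ ▸ div_nonneg (norm_nonneg W) hΔ.le
  set r : ℝ := 2 * κ + κ ^ 2 with hr
  have hr0 : 0 ≤ r := by positivity
  have hr1 : r < 1 := by nlinarith
  set a : ℝ := ‖Q₀ * W * P₀‖ with ha
  have ha0 : 0 ≤ a := norm_nonneg _
  -- norm bounds for building blocks
  have hQW : ‖Q₀ * W‖ ≤ ‖W‖ := by
    calc ‖Q₀ * W‖ ≤ ‖Q₀‖ * ‖W‖ := norm_mul_le _ _
      _ ≤ 1 * ‖W‖ := by gcongr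
      _ = ‖W‖ := one_mul _
  have hWP : ‖W * P₀‖ ≤ ‖W‖ := by
    calc ‖W * P₀‖ ≤ ‖W‖ * ‖P₀‖ := norm_mul_le _ _
      _ ≤ ‖W‖ * 1 := by gcongr
      _ = ‖W‖ := mul_one _
  have hQWR : ‖Q₀ * W * R₀‖ ≤ ‖W‖ * Δ⁻¹ := by
    calc ‖Q₀ * W * R₀‖ ≤ ‖Q₀ * W‖ * ‖R₀‖ := norm_mul_le _ _
      _ ≤ ‖W‖ * Δ⁻¹ := mul_le_mul hQW hRn (norm_nonneg _) (norm_nonneg _)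
  have hRWP : ‖R₀ * (W * P₀)‖ ≤ Δ⁻¹ * ‖W‖ := by
    calc ‖R₀ * (W * P₀)‖ ≤ ‖R₀‖ * ‖W * P₀‖ := norm_mul_le _ _
      _ ≤ Δ⁻¹ * ‖W‖ := mul_le_mul hRn hWP (norm_nonneg _) (by positivity)
  -- the recursion step
  have step : ∀ (T : E →L[ℂ] E) (c : ℝ), T = Q₀ * T * P₀ → ‖T‖ ≤ c →
      (-(Q₀ * W * R₀ * T) + R₀ * T * W * P₀ - R₀ * T * W * R₀ * W * P₀)
        = Q₀ * (-(Q₀ * W * R₀ * T) + R₀ * T * W * P₀ - R₀ * T * W * R₀ * W * P₀) * P₀ ∧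
      ‖-(Q₀ * W * R₀ * T) + R₀ * T * W * P₀ - R₀ * T * W * R₀ * W * P₀‖ ≤ r * c := by
    intro T c hT hTc
    have hc0 : 0 ≤ c := le_trans (norm_nonneg T) hTc
    have hTP : T * P₀ = T := by
      conv_lhs => rw [hT]
      rw [mul_assoc, hP₀idem, ← hT]
    constructor
    · have hleft : Q₀ * (-(Q₀ * W * R₀ * T) + R₀ * T * W * P₀
          - R₀ * T * W * R₀ * W * P₀)
          = -(Q₀ * W * R₀ * T) + R₀ * T * W * P₀ - R₀ * T * W * R₀ * W * P₀ := by
        simp only [mul_neg, mul_add, mul_sub, ← mul_assoc, hQ₀idem, hQR]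
      have hright : (-(Q₀ * W * R₀ * T) + R₀ * T * W * P₀
          - R₀ * T * W * R₀ * W * P₀) * P₀
          = -(Q₀ * W * R₀ * T) + R₀ * T * W * P₀ - R₀ * T * W * R₀ * W * P₀ := by
        simp only [neg_mul, add_mul, sub_mul, mul_assoc, hP₀idem, hTP]
      conv_rhs => rw [mul_assoc, hright, hleft]
    · have b1 : ‖Q₀ * W * R₀ * T‖ ≤ ‖W‖ * Δ⁻¹ * c := by
        calc ‖Q₀ * W * R₀ * T‖ ≤ ‖Q₀ * W * R₀‖ * ‖T‖ := norm_mul_le _ _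
          _ ≤ ‖W‖ * Δ⁻¹ * c := mul_le_mul hQWR hTc (norm_nonneg _) (by positivity)
      have b2 : ‖R₀ * T * W * P₀‖ ≤ Δ⁻¹ * c * ‖W‖ := by
        have e : R₀ * T * W * P₀ = R₀ * T * (W * P₀) := by rw [mul_assoc]
        rw [e]
        calc ‖R₀ * T * (W * P₀)‖ ≤ ‖R₀ * T‖ * ‖W * P₀‖ := norm_mul_le _ _
          _ ≤ ‖R₀‖ * ‖T‖ * ‖W * P₀‖ := by gcongr; exact norm_mul_le _ _
          _ ≤ Δ⁻¹ * c * ‖W‖ := by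
              apply mul_le_mul _ hWP (norm_nonneg _) (by positivity)
              exact mul_le_mul hRn hTc (norm_nonneg _) (by positivity)
      have b3 : ‖R₀ * T * W * R₀ * W * P₀‖ ≤ Δ⁻¹ * c * ‖W‖ * (Δ⁻¹ * ‖W‖) := by
        have e : R₀ * T * W * R₀ * W * P₀ = R₀ * T * W * (R₀ * (W * P₀)) := by
          simp only [mul_assoc]
        rw [e]
        calc ‖R₀ * T * W * (R₀ * (W * P₀))‖
            ≤ ‖R₀ * T * W‖ * ‖R₀ * (W * P₀)‖ := norm_mul_le _ _
          _ ≤ ‖R₀‖ * ‖T‖ * ‖W‖ * ‖R₀ * (W * P₀)‖ := by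
              gcongr
              calc ‖R₀ * T * W‖ ≤ ‖R₀ * T‖ * ‖W‖ := norm_mul_le _ _
                _ ≤ ‖R₀‖ * ‖T‖ * ‖W‖ := by gcongr; exact norm_mul_le _ _
          _ ≤ Δ⁻¹ * c * ‖W‖ * (Δ⁻¹ * ‖W‖) := by
              apply mul_le_mul _ hRWP (norm_nonneg _) (by positivity)
              apply mul_le_mul _ le_rfl (norm_nonneg _) (by positivity)
              exact mul_le_mul hRn hTc (norm_nonneg _) (by positivity)
      have hsum : ‖-(Q₀ * W * R₀ * T) + R₀ * T * W * P₀ - R₀ * T * W * R₀ * W * P₀‖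
          ≤ ‖Q₀ * W * R₀ * T‖ + ‖R₀ * T * W * P₀‖ + ‖R₀ * T * W * R₀ * W * P₀‖ := by
        calc ‖-(Q₀ * W * R₀ * T) + R₀ * T * W * P₀ - R₀ * T * W * R₀ * W * P₀‖
            ≤ ‖-(Q₀ * W * R₀ * T) + R₀ * T * W * P₀‖ + ‖R₀ * T * W * R₀ * W * P₀‖ :=
              norm_sub_le _ _
          _ ≤ ‖-(Q₀ * W * R₀ * T)‖ + ‖R₀ * T * W * P₀‖ + ‖R₀ * T * W * R₀ * W * P₀‖ := by
              gcongr; exact norm_add_le _ _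
          _ = ‖Q₀ * W * R₀ * T‖ + ‖R₀ * T * W * P₀‖ + ‖R₀ * T * W * R₀ * W * P₀‖ := by
              rw [norm_neg]
      have hκ' : κ = ‖W‖ * Δ⁻¹ := by rw [hκ, div_eq_mul_inv]
      have : r * c = ‖W‖ * Δ⁻¹ * c + Δ⁻¹ * c * ‖W‖ + Δ⁻¹ * c * ‖W‖ * (Δ⁻¹ * ‖W‖) := by
        rw [hr, hκ']; ring
      rw [this]
      linarith [hsum, b1, b2, b3]
  -- base case
  have hbase : S 1 = -(Q₀ * W * R₀ * (Q₀ * W * P₀)) + R₀ * (Q₀ * W * P₀) * W * P₀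
      - R₀ * (Q₀ * W * P₀) * W * R₀ * W * P₀ := by
    rw [hS1]
    have hRQ' : ∀ X : E →L[ℂ] E, R₀ * (Q₀ * X) = R₀ * X := fun X => by
      rw [← mul_assoc, hRQ]
    simp only [mul_assoc, hRQ']
  have hQWPstruct : (Q₀ * W * P₀ : E →L[ℂ] E) = Q₀ * (Q₀ * W * P₀) * P₀ := by
    simp only [← mul_assoc, hQ₀idem]
    rw [mul_assoc (Q₀ * W) P₀ P₀, hP₀idem]
  -- main induction
  have main : ∀ ℓ, 1 ≤ ℓ → S ℓ = Q₀ * S ℓ * P₀ ∧ ‖S ℓ‖ ≤ r ^ ℓ * a := by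
    intro ℓ hℓ
    induction ℓ, hℓ using Nat.le_induction with
    | base =>
        have h := step (Q₀ * W * P₀) a hQWPstruct le_rfl
        rw [← hbase] at h
        refine ⟨h.1, ?_⟩
        rw [pow_one]
        exact h.2
    | succ ℓ hℓ ih =>
        have h := step (S ℓ) (r ^ ℓ * a) ih.1 ih.2
        rw [← hSrec ℓ hℓ] at h
        refine ⟨h.1, ?_⟩
        calc ‖S (ℓ + 1)‖ ≤ r * (r ^ ℓ * a) := h.2
          _ = r ^ (ℓ + 1) * a := by ring
  refine ⟨main, ?_⟩
  -- summability
  have hbound : ∀ ℓ : ℕ, ‖S (ℓ + 1)‖ ≤ r ^ (ℓ + 1) * a := fun ℓ =>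
    (main (ℓ + 1) (Nat.le_add_left 1 ℓ)).2
  have hgeom : Summable (fun ℓ : ℕ => r ^ (ℓ + 1) * a) := by
    have : Summable (fun ℓ : ℕ => r ^ ℓ) := summable_geometric_of_lt_one hr0 hr1
    simpa [pow_succ, mul_comm, mul_assoc] using (this.mul_left r).mul_right a
  have hsummable : Summable (fun ℓ : ℕ => ‖S (ℓ + 1)‖) :=
    Summable.of_nonneg_of_le (fun _ => norm_nonneg _) hbound hgeom
  refine ⟨hsummable, ?_, ?_⟩
  · -- tsum bound
    have h1 : ‖∑' ℓ : ℕ, S (ℓ + 1)‖ ≤ ∑' ℓ : ℕ, ‖S (ℓ + 1)‖ :=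
      norm_tsum_le_tsum_norm hsummable
    have h2 : ∑' ℓ : ℕ, ‖S (ℓ + 1)‖ ≤ ∑' ℓ : ℕ, r ^ (ℓ + 1) * a :=
      Summable.tsum_le_tsum hbound hsummable hgeom
    have h3 : ∑' ℓ : ℕ, r ^ (ℓ + 1) * a = r / (1 - r) * a := by
      rw [tsum_mul_right]
      congr 1
      have : ∀ ℓ : ℕ, r ^ (ℓ + 1) = r * r ^ ℓ := fun ℓ => by ring
      simp only [this]
      rw [tsum_mul_left, tsum_geometric_of_lt_one hr0 hr1, div_eq_mul_inv]
    calc ‖∑' ℓ : ℕ, S (ℓ + 1)‖ ≤ ∑' ℓ : ℕ, r ^ (ℓ + 1) * a := h1.trans h2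
      _ = r / (1 - r) * a := h3
  · -- final numeric bound
    exact S_numeric_aux κ a hκ0 hκ4 ha0
end
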